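/- Let n ≥ 2. The open unit ball 𝔹ⁿ = {(z₁,…,zₙ) ∈ ℂⁿ : |z₁|² + ⋯ + |zₙ|² < 1} and the open unit polydisk 𝔻ⁿ = {(z₁,…,zₙ) ∈ ℂⁿ : |zᵢ| < 1 for all i} are not biholomorphic: there exists no bijection f : 𝔹ⁿ → 𝔻ⁿ such that both f and f⁻¹ are holomorphic. (Theorem of Poincaré, cited as item (e) in Section 1.2.) -/

import Mathlib

open Complex Metric Set

variable {n : ℕ}

set_option maxHeartbeats 1000000


lemma normSq_lt_one {a : ℂ} (ha : ‖a‖ < 1) : normSq a < 1 := by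
  have h : normSq a = ‖a‖ ^ 2 := by rw [Complex.normSq_eq_norm_sq]
  nlinarith [norm_nonneg a]

lemma mob_denom_ne {a z : ℂ} (ha : ‖a‖ < 1) (hz : ‖z‖ < 1) : 1 - (starRingEnd ℂ) a * z ≠ 0 := by
  intro h
  have h1 : ‖(starRingEnd ℂ) a * z‖ < 1 := by
    rw [norm_mul, RCLike.norm_conj]
    exact mul_lt_one_of_nonneg_of_lt_one_left (norm_nonneg _) ha hz.le
  rw [sub_eq_zero] at h
  rw [← h] at h1
  simp at h1

lemma mob_key {a z : ℂ} (ha : ‖a‖ < 1) (hz : ‖z‖ < 1) :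
    ‖z - a‖ < ‖1 - (starRingEnd ℂ) a * z‖ := by
  have h : normSq (1 - (starRingEnd ℂ) a * z) - normSq (z - a)
      = (1 - normSq a) * (1 - normSq z) := by
    simp [Complex.normSq_apply, Complex.mul_re, Complex.mul_im, Complex.sub_re, Complex.sub_im,
      Complex.conj_re, Complex.conj_im, Complex.one_re, Complex.one_im]
    ring
  have ha2 := normSq_lt_one ha
  have hz2 := normSq_lt_one hz
  have hlt : normSq (z - a) < normSq (1 - (starRingEnd ℂ) a * z) := by nlinarith
  refine lt_of_pow_lt_pow_left₀ 2 (norm_nonneg _) ?_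
  simpa [Complex.sq_norm] using hlt

lemma mob_mem {a z : ℂ} (ha : ‖a‖ < 1) (hz : ‖z‖ < 1) :
    ‖(z - a) / (1 - (starRingEnd ℂ) a * z)‖ < 1 := by
  rw [norm_div, div_lt_one (norm_pos_iff.mpr (mob_denom_ne ha hz))]
  exact mob_key ha hz

lemma mob_self_ne {a : ℂ} (ha : ‖a‖ < 1) : 1 - (starRingEnd ℂ) a * a ≠ 0 := by
  intro h
  rw [sub_eq_zero] at h
  have h2 : ((starRingEnd ℂ) a * a).re = normSq a := by
    simp [Complex.normSq_apply, Complex.mul_re, Complex.conj_re, Complex.conj_im]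
  rw [← h] at h2
  simp at h2
  nlinarith [normSq_lt_one ha]

lemma mob_inv {a z : ℂ} (ha : ‖a‖ < 1) (hz : ‖z‖ < 1) :
    ((z - a) / (1 - (starRingEnd ℂ) a * z) - (-a)) /
      (1 - (starRingEnd ℂ) (-a) * ((z - a) / (1 - (starRingEnd ℂ) a * z))) = z := by
  have hd := mob_denom_ne ha hz
  have hne := mob_self_ne ha
  have key : (1 - (starRingEnd ℂ) (-a) * ((z - a) / (1 - (starRingEnd ℂ) a * z)))
      * (1 - (starRingEnd ℂ) a * z) = 1 - (starRingEnd ℂ) a * a := by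
    rw [map_neg]; field_simp; ring
  have hd2 : 1 - (starRingEnd ℂ) (-a) * ((z - a) / (1 - (starRingEnd ℂ) a * z)) ≠ 0 := by
    intro h
    rw [h, zero_mul] at key
    exact hne key.symm
  rw [div_eq_iff hd2, map_neg]
  have hd' : 1 - z * (starRingEnd ℂ) a ≠ 0 := by rw [mul_comm]; exact hd
  field_simp
  ring


def PD (n : ℕ) : Set (EuclideanSpace ℂ (Fin n)) := {z | ∀ i, ‖z i‖ < 1}

lemma zero_mem_PD : (0 : EuclideanSpace ℂ (Fin n)) ∈ PD n := by
  intro i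
  show ‖(0 : EuclideanSpace ℂ (Fin n)) i‖ < 1
  norm_num

lemma PD_open : IsOpen (PD n) := by
  have h : PD n = ⋂ i, (fun z : EuclideanSpace ℂ (Fin n) => z i) ⁻¹' (ball (0:ℂ) 1) := by
    ext z; simp [PD, mem_ball, dist_eq_norm]
  rw [h]
  exact isOpen_iInter_of_finite fun i =>
    (EuclideanSpace.proj i).continuous.isOpen_preimage _ isOpen_ball

lemma sum_coord (v : Fin n → EuclideanSpace ℂ (Fin n)) (i : Fin n) :
    (∑ k, v k) i = ∑ k, v k i := by
  rw [WithLp.ofLp_sum]; exact Finset.sum_apply i Finset.univ _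

lemma decomp (w : EuclideanSpace ℂ (Fin n)) :
    w = ∑ k, (w k) • EuclideanSpace.single k (1:ℂ) := by
  refine PiLp.ext fun i => ?_
  rw [sum_coord]
  simp [EuclideanSpace.single_apply]

lemma entry_mul (T S : EuclideanSpace ℂ (Fin n) →L[ℂ] EuclideanSpace ℂ (Fin n))
    (h : ∀ w, T (S w) = w) (i k : Fin n) :
    ∑ j, T (EuclideanSpace.single j (1:ℂ)) i * S (EuclideanSpace.single k (1:ℂ)) j
      = if i = k then 1 else 0 := by
  have hmap : T (∑ j, S (EuclideanSpace.single k (1:ℂ)) j • EuclideanSpace.single j (1:ℂ))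
      = ∑ j, S (EuclideanSpace.single k (1:ℂ)) j • T (EuclideanSpace.single j (1:ℂ)) := by
    rw [map_sum]
    exact Finset.sum_congr rfl fun j _ => by rw [map_smul]
  calc ∑ j, T (EuclideanSpace.single j (1:ℂ)) i * S (EuclideanSpace.single k (1:ℂ)) j
      = ∑ j, (S (EuclideanSpace.single k (1:ℂ)) j • T (EuclideanSpace.single j (1:ℂ))) i := by
        refine Finset.sum_congr rfl fun j _ => ?_
        rw [PiLp.smul_apply, smul_eq_mul, mul_comm]
    _ = (∑ j, S (EuclideanSpace.single k (1:ℂ)) j • T (EuclideanSpace.single j (1:ℂ))) i :=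
        (sum_coord _ i).symm
    _ = T (∑ j, S (EuclideanSpace.single k (1:ℂ)) j • EuclideanSpace.single j (1:ℂ)) i := by
        rw [hmap]
    _ = T (S (EuclideanSpace.single k (1:ℂ))) i := by rw [← decomp]
    _ = (EuclideanSpace.single k (1:ℂ)) i := by rw [h]
    _ = if i = k then 1 else 0 := EuclideanSpace.single_apply k 1 i

lemma diag_basis (M : EuclideanSpace ℂ (Fin n) →L[ℂ] EuclideanSpace ℂ (Fin n))
    (hM : ∀ i j, i ≠ j → M (EuclideanSpace.single j (1:ℂ)) i = 0) (j : Fin n) :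
    M (EuclideanSpace.single j (1:ℂ))
      = M (EuclideanSpace.single j (1:ℂ)) j • EuclideanSpace.single j (1:ℂ) := by
  refine PiLp.ext fun i => ?_
  rw [PiLp.smul_apply, smul_eq_mul, EuclideanSpace.single_apply]
  rcases eq_or_ne i j with h | h
  · subst h; rw [if_pos rfl, mul_one]
  · rw [if_neg h, mul_zero, hM i j h]

lemma diag_comm (T S : EuclideanSpace ℂ (Fin n) →L[ℂ] EuclideanSpace ℂ (Fin n))
    (hT : ∀ i j, i ≠ j → T (EuclideanSpace.single j (1:ℂ)) i = 0)
    (hS : ∀ i j, i ≠ j → S (EuclideanSpace.single j (1:ℂ)) i = 0) (w : EuclideanSpace ℂ (Fin n)) :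
    T (S w) = S (T w) := by
  have hbasis : ∀ j, T (S (EuclideanSpace.single j (1:ℂ))) = S (T (EuclideanSpace.single j (1:ℂ))) := by
    intro j
    have hs := diag_basis S hS j
    have ht := diag_basis T hT j
    conv_lhs => rw [hs, map_smul, ht]
    conv_rhs => rw [ht, map_smul, hs]
    rw [smul_smul, smul_smul, mul_comm]
  have expand : ∀ (M M' : EuclideanSpace ℂ (Fin n) →L[ℂ] EuclideanSpace ℂ (Fin n)),
      M (M' w) = ∑ k, (w k) • M (M' (EuclideanSpace.single k (1:ℂ))) := by
    intro M M'
    conv_lhs => rw [decomp w]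
    rw [map_sum, map_sum]
    exact Finset.sum_congr rfl fun k _ => by rw [map_smul, map_smul]
  rw [expand T S, expand S T]
  exact Finset.sum_congr rfl fun k _ => by rw [hbasis k]
lemma schwarz_coord (h : EuclideanSpace ℂ (Fin n) → EuclideanSpace ℂ (Fin n))
    (hd : DifferentiableOn ℂ h (PD n)) (hmaps : MapsTo h (PD n) (PD n)) (h0 : h 0 = 0)
    (v : EuclideanSpace ℂ (Fin n)) (hv : ∀ i, ‖v i‖ ≤ 1) (i : Fin n) :
    ‖fderiv ℂ h 0 v i‖ ≤ 1 := by
  set sm : ℂ →L[ℂ] EuclideanSpace ℂ (Fin n) :=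
    ContinuousLinearMap.smulRight (ContinuousLinearMap.id ℂ ℂ) v with hsm_def
  have hsm_apply : ∀ ζ : ℂ, sm ζ = ζ • v := fun ζ => rfl
  have hmem : ∀ ζ ∈ ball (0:ℂ) 1, (ζ • v) ∈ PD n := by
    intro ζ hζ j
    rw [mem_ball, dist_zero_right] at hζ
    show ‖(ζ • v) j‖ < 1
    have he : (ζ • v) j = ζ * v j := rfl
    rw [he, norm_mul]
    calc ‖ζ‖ * ‖v j‖ ≤ ‖ζ‖ * 1 := mul_le_mul_of_nonneg_left (hv j) (norm_nonneg _)
      _ < 1 := by simpa using hζ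
  set φ : ℂ → ℂ := fun ζ => h (ζ • v) i with hφ_def
  have hφ0 : φ 0 = 0 := by
    show h ((0:ℂ) • v) i = 0
    rw [zero_smul, h0]; rfl
  have h1 : DifferentiableOn ℂ (fun ζ : ℂ => h (ζ • v)) (ball (0:ℂ) 1) := by
    refine hd.comp ?_ hmem
    intro ζ _
    have : DifferentiableAt ℂ (fun ζ : ℂ => ζ • v) ζ := by
      simpa [hsm_apply] using sm.differentiableAt (x := ζ)
    exact this.differentiableWithinAt
  have hdφ : DifferentiableOn ℂ φ (ball (0:ℂ) 1) := by
    intro ζ hζ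
    exact ((EuclideanSpace.proj i).differentiableAt.comp_differentiableWithinAt ζ (h1 ζ hζ) : _)
  have hmapsφ : MapsTo φ (ball (0:ℂ) 1) (ball (φ 0) 1) := by
    intro ζ hζ
    rw [hφ0, mem_ball, dist_zero_right]
    exact hmaps (hmem ζ hζ) i
  have hderiv : deriv φ 0 = fderiv ℂ h 0 v i := by
    have hhd : HasFDerivAt h (fderiv ℂ h 0) ((0:ℂ) • v) := by
      rw [zero_smul]
      exact (hd.differentiableAt (PD_open.mem_nhds zero_mem_PD)).hasFDerivAt
    have hsm0 : HasFDerivAt (fun ζ : ℂ => ζ • v) sm 0 := by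
      have hfun : (fun ζ : ℂ => ζ • v) = ⇑sm := funext fun ζ => (hsm_apply ζ).symm
      rw [hfun]; exact sm.hasFDerivAt (x := (0:ℂ))
    have hc : HasFDerivAt (fun ζ : ℂ => h (ζ • v)) ((fderiv ℂ h 0).comp sm) 0 :=
      hhd.comp (0:ℂ) hsm0
    have hc2 := (EuclideanSpace.proj i).hasFDerivAt.comp (0:ℂ) hc
    have hc3 : HasFDerivAt φ ((EuclideanSpace.proj i).comp ((fderiv ℂ h 0).comp sm)) 0 := hc2
    rw [hc3.hasDerivAt.deriv]
    show (EuclideanSpace.proj i) ((fderiv ℂ h 0) (sm 1)) = fderiv ℂ h 0 v i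
    rw [hsm_apply, one_smul]
    rfl
  have hs := Complex.norm_deriv_le_div_of_mapsTo_ball hdφ (hmapsφ.mono_right ball_subset_closedBall) one_pos
  rw [div_one, hderiv] at hs
  exact hs

lemma row_sum (T : EuclideanSpace ℂ (Fin n) →L[ℂ] EuclideanSpace ℂ (Fin n))
    (hT : ∀ w : EuclideanSpace ℂ (Fin n), (∀ i, ‖w i‖ ≤ 1) → ∀ i, ‖T w i‖ ≤ 1) (i : Fin n) :
    ∑ j, ‖T (EuclideanSpace.single j (1:ℂ)) i‖ ≤ 1 := by
  set c : Fin n → ℂ := fun j => T (EuclideanSpace.single j (1:ℂ)) i with hc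
  set w : EuclideanSpace ℂ (Fin n) := WithLp.toLp 2 (fun j => (starRingEnd ℂ) (c j) / ‖c j‖) with hw
  have hwj : ∀ j, w j = (starRingEnd ℂ) (c j) / ‖c j‖ := fun j => rfl
  have hwnorm : ∀ j, ‖w j‖ ≤ 1 := by
    intro j
    rw [hwj, norm_div, RCLike.norm_conj]
    rcases eq_or_ne (c j) 0 with h | h
    · simp [h]
    · rw [Complex.norm_real, Real.norm_of_nonneg (norm_nonneg _),
        div_self (norm_ne_zero_iff.mpr h)]
  have hdec : (w : EuclideanSpace ℂ (Fin n)) = ∑ k, (w k) • EuclideanSpace.single k (1:ℂ) := by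
    refine PiLp.ext fun j => ?_
    rw [sum_coord]
    simp [EuclideanSpace.single_apply]
  have hTw : T w i = ((∑ j, ‖c j‖ : ℝ) : ℂ) := by
    conv_lhs => rw [hdec]
    rw [map_sum, sum_coord]
    push_cast
    refine Finset.sum_congr rfl fun j _ => ?_
    rw [map_smul]
    have he : (w j • T (EuclideanSpace.single j (1:ℂ))) i = w j * c j := rfl
    rw [he, hwj]
    rcases eq_or_ne (c j) 0 with h | h
    · simp [h]
    · rw [div_mul_eq_mul_div, mul_comm ((starRingEnd ℂ) (c j)) (c j), Complex.mul_conj]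
      rw [Complex.normSq_eq_norm_sq]
      rw [sq]
      push_cast
      rw [mul_div_assoc, div_self (by exact_mod_cast norm_ne_zero_iff.mpr h), mul_one]
  have hb := hT w hwnorm i
  rw [hTw, Complex.norm_real, Real.norm_of_nonneg (Finset.sum_nonneg fun j _ => norm_nonneg _)] at hb
  exact hb


lemma genperm (t s : Fin n → Fin n → ℂ)
    (hrt : ∀ i, ∑ j, ‖t i j‖ ≤ 1) (hrs : ∀ i, ∑ j, ‖s i j‖ ≤ 1)
    (hTS : ∀ i k, ∑ j, t i j * s j k = if i = k then 1 else 0)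
    (hST : ∀ i k, ∑ j, s i j * t j k = if i = k then 1 else 0) :
    ∀ i j, t i j = 0 ∨ ‖t i j‖ = 1 := by
  intro i j
  rcases eq_or_ne (t i j) 0 with h | h
  · exact Or.inl h
  right
  have hsle : ∀ k l, ‖s k l‖ ≤ 1 := fun k l =>
    le_trans (Finset.single_le_sum (fun m _ => norm_nonneg (s k m)) (Finset.mem_univ l)) (hrs k)
  have htle : ∀ k l, ‖t k l‖ ≤ 1 := fun k l =>
    le_trans (Finset.single_le_sum (fun m _ => norm_nonneg (t k m)) (Finset.mem_univ l)) (hrt k)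
  -- 1 ≤ ∑ k ‖t i k‖ ‖s k i‖
  have h1 : (1:ℝ) ≤ ∑ k, ‖t i k‖ * ‖s k i‖ := by
    have := hTS i i
    rw [if_pos rfl] at this
    calc (1:ℝ) = ‖∑ k, t i k * s k i‖ := by rw [this]; norm_num
      _ ≤ ∑ k, ‖t i k * s k i‖ := norm_sum_le _ _
      _ = ∑ k, ‖t i k‖ * ‖s k i‖ := by simp [norm_mul]
  have h2 : ∑ k, ‖t i k‖ * ‖s k i‖ ≤ ∑ k, ‖t i k‖ := by
    refine Finset.sum_le_sum fun k _ => ?_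
    exact mul_le_of_le_one_right (norm_nonneg _) (hsle k i)
  -- each term ‖t i k‖ (1 - ‖s k i‖) = 0
  have h3 : ∑ k, ‖t i k‖ * (1 - ‖s k i‖) = 0 := by
    have e : ∑ k, ‖t i k‖ * (1 - ‖s k i‖) = (∑ k, ‖t i k‖) - ∑ k, ‖t i k‖ * ‖s k i‖ := by
      rw [← Finset.sum_sub_distrib]
      exact Finset.sum_congr rfl fun k _ => by ring
    have := hrt i
    nlinarith [h1, h2]
  have h4 : ‖t i j‖ * (1 - ‖s j i‖) = 0 := by
    have := (Finset.sum_eq_zero_iff_of_nonneg (fun k _ => ?_)).mp h3 j (Finset.mem_univ j)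
    · exact this
    · exact mul_nonneg (norm_nonneg _) (by linarith [hsle k i])
  have hsji : ‖s j i‖ = 1 := by
    rcases mul_eq_zero.mp h4 with h' | h'
    · exact absurd (norm_eq_zero.mp h') h
    · linarith
  -- row j of s vanishes off column i
  have hszero : ∀ k, k ≠ i → s j k = 0 := by
    intro k hk
    have hsum := hrs j
    have : ∑ l ∈ Finset.univ.erase i, ‖s j l‖ ≤ 0 := by
      have := Finset.add_sum_erase Finset.univ (fun l => ‖s j l‖) (Finset.mem_univ i)
      rw [← this] at hsum
      linarith [hsji]
    have hk0 : ‖s j k‖ ≤ 0 :=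
      le_trans (Finset.single_le_sum (fun m _ => norm_nonneg (s j m))
        (Finset.mem_erase.mpr ⟨hk, Finset.mem_univ k⟩)) this
    exact norm_eq_zero.mp (le_antisymm hk0 (norm_nonneg _))
  -- (ST)_{jj} = s j i * t i j = 1
  have h5 : s j i * t i j = 1 := by
    have := hST j j
    rw [if_pos rfl] at this
    rw [← this]
    rw [Finset.sum_eq_single i]
    · intro b _ hb
      rw [hszero b hb, zero_mul]
    · intro hb
      exact absurd (Finset.mem_univ i) hb
  have := congrArg norm h5
  rw [norm_mul, hsji, one_mul] at this
  simpa using this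

lemma path_zero (h : ℝ → ℂ) (hc : Continuous h) (hv : ∀ θ, h θ = 0 ∨ ‖h θ‖ = 1)
    (h0 : h 0 = 0) : ∀ θ, h θ = 0 := by
  intro θ
  by_contra hne
  have h1 : ‖h θ‖ = 1 := (hv θ).resolve_left hne
  set m : ℝ → ℝ := fun r => ‖h (r * θ)‖ with hm
  have hmc : Continuous m := (hc.comp (continuous_id.mul continuous_const)).norm
  have hm0 : m 0 = 0 := by simp [hm, h0]
  have hm1 : m 1 = 1 := by show ‖h (1*θ)‖ = 1; rw [one_mul, h1]
  have : (1/2 : ℝ) ∈ Icc (m 0) (m 1) := by rw [hm0, hm1]; norm_num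
  have := intermediate_value_Icc (by norm_num : (0:ℝ) ≤ 1) hmc.continuousOn this
  obtain ⟨x, _, hx⟩ := this
  rcases hv (x * θ) with h' | h'
  · rw [hm] at hx; simp only at hx
    rw [h'] at hx; simp at hx
  · rw [hm] at hx; simp only at hx
    rw [h'] at hx; norm_num at hx


noncomputable def rotL (p q : Fin n) (θ : ℝ) : EuclideanSpace ℂ (Fin n) →L[ℂ] EuclideanSpace ℂ (Fin n) :=
  LinearMap.toContinuousLinearMap
  { toFun := fun z => WithLp.toLp 2 (fun i => if i = p then (Real.cos θ : ℂ) * z p - (Real.sin θ : ℂ) * z q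
      else if i = q then (Real.sin θ : ℂ) * z p + (Real.cos θ : ℂ) * z q else z i)
    map_add' := by
      intro x y
      refine PiLp.ext fun i => ?_
      simp only [PiLp.add_apply, WithLp.ofLp_toLp]
      split_ifs <;> ring
    map_smul' := by
      intro c x
      refine PiLp.ext fun i => ?_
      simp only [PiLp.smul_apply, smul_eq_mul, RingHom.id_apply, WithLp.ofLp_toLp]
      split_ifs <;> ring }

lemma rotL_apply (p q : Fin n) (θ : ℝ) (z : EuclideanSpace ℂ (Fin n)) (i : Fin n) :
    rotL p q θ z i = if i = p then (Real.cos θ : ℂ) * z p - (Real.sin θ : ℂ) * z q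
      else if i = q then (Real.sin θ : ℂ) * z p + (Real.cos θ : ℂ) * z q else z i := rfl

lemma norm_sq_complex (w : ℂ) : ‖w‖^2 = Complex.normSq w := by
  rw [Complex.sq_norm]

lemma rotL_norm (p q : Fin n) (hpq : p ≠ q) (θ : ℝ) (z : EuclideanSpace ℂ (Fin n)) :
    ‖rotL p q θ z‖ = ‖z‖ := by
  rw [EuclideanSpace.norm_eq, EuclideanSpace.norm_eq]
  congr 1
  have hsub : ({p, q} : Finset (Fin n)) ⊆ Finset.univ := Finset.subset_univ _
  rw [← Finset.sum_sdiff hsub, ← Finset.sum_sdiff hsub]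
  congr 1
  · refine Finset.sum_congr rfl fun i hi => ?_
    rw [Finset.mem_sdiff, Finset.mem_insert, Finset.mem_singleton] at hi
    push_neg at hi
    rw [rotL_apply, if_neg hi.2.1, if_neg hi.2.2]
  · rw [Finset.sum_pair hpq, Finset.sum_pair hpq]
    rw [rotL_apply, rotL_apply, if_pos rfl, if_neg (Ne.symm hpq), if_pos rfl]
    simp only [norm_sq_complex, Complex.normSq_apply, Complex.sub_re, Complex.sub_im,
      Complex.add_re, Complex.add_im, Complex.mul_re, Complex.mul_im,
      Complex.ofReal_re, Complex.ofReal_im]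
    ring_nf
    nlinarith [Real.sin_sq_add_cos_sq θ, sq_nonneg ((z p).re), sq_nonneg ((z p).im),
      sq_nonneg ((z q).re), sq_nonneg ((z q).im)]

lemma pyth_c (θ : ℝ) : ((Real.sin θ : ℂ))^2 + ((Real.cos θ : ℂ))^2 = 1 := by
  exact_mod_cast congrArg (fun r : ℝ => (r : ℂ)) (Real.sin_sq_add_cos_sq θ)

lemma rotL_inv (p q : Fin n) (hpq : p ≠ q) (θ : ℝ) (z : EuclideanSpace ℂ (Fin n)) :
    rotL p q θ (rotL p q (-θ) z) = z := by
  refine PiLp.ext fun i => ?_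
  have hp := pyth_c θ
  rw [rotL_apply]
  rcases eq_or_ne i p with hip | hip
  · subst hip
    rw [if_pos rfl, rotL_apply, rotL_apply, if_pos rfl, if_neg (Ne.symm hpq), if_pos rfl]
    push_cast [Real.cos_neg, Real.sin_neg] at hp ⊢
    linear_combination (z i) * hp
  · rw [if_neg hip]
    rcases eq_or_ne i q with hiq | hiq
    · subst hiq
      rw [if_pos rfl, rotL_apply, rotL_apply, if_pos rfl, if_neg (Ne.symm hpq), if_pos rfl]
      push_cast [Real.cos_neg, Real.sin_neg] at hp ⊢
      linear_combination (z i) * hp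
    · rw [if_neg hiq, rotL_apply, if_neg hip, if_neg hiq]

lemma rotL_zero (p q : Fin n) (hpq : p ≠ q) : rotL p q 0 = ContinuousLinearMap.id ℂ _ := by
  refine ContinuousLinearMap.ext fun z => PiLp.ext fun i => ?_
  rw [rotL_apply]
  simp only [Real.cos_zero, Real.sin_zero, Complex.ofReal_one, Complex.ofReal_zero,
    one_mul, zero_mul, sub_zero, add_zero, zero_add]
  split_ifs with h1 h2
  · subst h1; rfl
  · subst h2; rfl
  · rfl

lemma rotL_cont (p q : Fin n) (y : EuclideanSpace ℂ (Fin n)) :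
    Continuous fun θ : ℝ => rotL p q θ y := by
  rw [← (PiLp.continuousLinearEquiv 2 ℂ (fun _ : Fin n => ℂ)).toHomeomorph.comp_continuous_iff]
  apply continuous_pi
  intro i
  show Continuous fun θ : ℝ => rotL p q θ y i
  simp only [rotL_apply]
  split_ifs <;> fun_prop

noncomputable def phL (q : Fin n) (θ : ℝ) : EuclideanSpace ℂ (Fin n) →L[ℂ] EuclideanSpace ℂ (Fin n) :=
  LinearMap.toContinuousLinearMap
  { toFun := fun z => WithLp.toLp 2 (fun i => if i = q then Complex.exp (θ * Complex.I) * z q else z i)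
    map_add' := by
      intro x y
      refine PiLp.ext fun i => ?_
      simp only [PiLp.add_apply, WithLp.ofLp_toLp]
      split_ifs <;> ring
    map_smul' := by
      intro c x
      refine PiLp.ext fun i => ?_
      simp only [PiLp.smul_apply, smul_eq_mul, RingHom.id_apply, WithLp.ofLp_toLp]
      split_ifs <;> ring }

lemma phL_apply (q : Fin n) (θ : ℝ) (z : EuclideanSpace ℂ (Fin n)) (i : Fin n) :
    phL q θ z i = if i = q then Complex.exp (θ * Complex.I) * z q else z i := rfl

lemma phL_norm (q : Fin n) (θ : ℝ) (z : EuclideanSpace ℂ (Fin n)) :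
    ‖phL q θ z‖ = ‖z‖ := by
  rw [EuclideanSpace.norm_eq, EuclideanSpace.norm_eq]
  congr 1
  refine Finset.sum_congr rfl fun i _ => ?_
  rw [phL_apply]
  split_ifs with h
  · rw [norm_mul, Complex.norm_exp_ofReal_mul_I, one_mul, h]
  · rfl

lemma phL_inv (q : Fin n) (θ : ℝ) (z : EuclideanSpace ℂ (Fin n)) :
    phL q θ (phL q (-θ) z) = z := by
  refine PiLp.ext fun i => ?_
  rw [phL_apply]
  rcases eq_or_ne i q with h | h
  · subst h
    rw [if_pos rfl, phL_apply, if_pos rfl, ← mul_assoc, ← Complex.exp_add]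
    have he : ((θ:ℂ) * Complex.I + ((-θ:ℝ):ℂ) * Complex.I) = 0 := by push_cast; ring
    rw [he, Complex.exp_zero, one_mul]
  · rw [if_neg h, phL_apply, if_neg h]

lemma phL_zero (q : Fin n) : phL q 0 = ContinuousLinearMap.id ℂ _ := by
  refine ContinuousLinearMap.ext fun z => PiLp.ext fun i => ?_
  rw [phL_apply]
  simp only [Complex.ofReal_zero, zero_mul, Complex.exp_zero, one_mul]
  split_ifs with h
  · subst h; rfl
  · rfl

lemma phL_cont (q : Fin n) (y : EuclideanSpace ℂ (Fin n)) :
    Continuous fun θ : ℝ => phL q θ y := by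
  rw [← (PiLp.continuousLinearEquiv 2 ℂ (fun _ : Fin n => ℂ)).toHomeomorph.comp_continuous_iff]
  apply continuous_pi
  intro i
  show Continuous fun θ : ℝ => phL q θ y i
  simp only [phL_apply]
  split_ifs <;> fun_prop
lemma no_biholo_normalized (n : ℕ) (hn : 2 ≤ n)
    (F G : EuclideanSpace ℂ (Fin n) → EuclideanSpace ℂ (Fin n))
    (hdF : DifferentiableOn ℂ F (ball (0 : EuclideanSpace ℂ (Fin n)) 1))
    (hdG : DifferentiableOn ℂ G (PD n))
    (hFmaps : MapsTo F (ball (0 : EuclideanSpace ℂ (Fin n)) 1) (PD n))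
    (hGmaps : MapsTo G (PD n) (ball (0 : EuclideanSpace ℂ (Fin n)) 1))
    (hGF : ∀ z ∈ ball (0 : EuclideanSpace ℂ (Fin n)) 1, G (F z) = z)
    (hFG : ∀ w ∈ PD n, F (G w) = w)
    (hF0 : F 0 = 0) : False := by
  have h0ball : (0 : EuclideanSpace ℂ (Fin n)) ∈ ball (0 : EuclideanSpace ℂ (Fin n)) 1 :=
    mem_ball_self one_pos
  have hG0 : G 0 = 0 := by have h' := hGF 0 h0ball; rwa [hF0] at h'
  have hdFat : DifferentiableAt ℂ F 0 := hdF.differentiableAt (isOpen_ball.mem_nhds h0ball)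
  have hdGat : DifferentiableAt ℂ G 0 := hdG.differentiableAt (PD_open.mem_nhds zero_mem_PD)
  set A := fderiv ℂ F 0 with hA
  set Bd := fderiv ℂ G 0 with hBd
  have hba : ∀ x, Bd (A x) = x := by
    have hev : G ∘ F =ᶠ[nhds (0:EuclideanSpace ℂ (Fin n))] id :=
      Filter.eventuallyEq_of_mem (isOpen_ball.mem_nhds h0ball) (fun z hz => hGF z hz)
    have h1 : fderiv ℂ (G ∘ F) 0 = fderiv ℂ (id : EuclideanSpace ℂ (Fin n) → _) 0 :=
      hev.fderiv_eq
    have h2 : fderiv ℂ (G ∘ F) 0 = (fderiv ℂ G (F 0)).comp A :=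
      fderiv_comp 0 (by rw [hF0]; exact hdGat) hdFat
    rw [hF0] at h2
    rw [h2, fderiv_id] at h1
    intro x
    have := congrArg (fun M : EuclideanSpace ℂ (Fin n) →L[ℂ] EuclideanSpace ℂ (Fin n) => M x) h1
    simpa using this
  have hab : ∀ x, A (Bd x) = x := by
    have hev : F ∘ G =ᶠ[nhds (0:EuclideanSpace ℂ (Fin n))] id :=
      Filter.eventuallyEq_of_mem (PD_open.mem_nhds zero_mem_PD) (fun z hz => hFG z hz)
    have h1 : fderiv ℂ (F ∘ G) 0 = fderiv ℂ (id : EuclideanSpace ℂ (Fin n) → _) 0 :=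
      hev.fderiv_eq
    have h2 : fderiv ℂ (F ∘ G) 0 = (fderiv ℂ F (G 0)).comp Bd :=
      fderiv_comp 0 (by rw [hG0]; exact hdFat) hdGat
    rw [hG0] at h2
    rw [h2, fderiv_id] at h1
    intro x
    have := congrArg (fun M : EuclideanSpace ℂ (Fin n) →L[ℂ] EuclideanSpace ℂ (Fin n) => M x) h1
    simpa using this
  have key : ∀ u : EuclideanSpace ℂ (Fin n) →L[ℂ] EuclideanSpace ℂ (Fin n),
      (∀ z, ‖u z‖ = ‖z‖) → ∀ i,
      ∑ j, ‖A (u (Bd (EuclideanSpace.single j (1:ℂ)))) i‖ ≤ 1 := by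
    intro u hu i
    have humaps : MapsTo (⇑u) (ball (0 : EuclideanSpace ℂ (Fin n)) 1)
        (ball (0 : EuclideanSpace ℂ (Fin n)) 1) := by
      intro z hz
      rw [mem_ball_zero_iff] at hz ⊢
      rw [hu]; exact hz
    have hdug : DifferentiableOn ℂ (⇑u ∘ G) (PD n) := u.differentiable.comp_differentiableOn hdG
    have hdh : DifferentiableOn ℂ (F ∘ ⇑u ∘ G) (PD n) := hdF.comp hdug (humaps.comp hGmaps)
    have hmapsh : MapsTo (F ∘ ⇑u ∘ G) (PD n) (PD n) := hFmaps.comp (humaps.comp hGmaps)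
    have hh0 : (F ∘ ⇑u ∘ G) 0 = 0 := by
      show F (u (G 0)) = 0
      rw [hG0, map_zero, hF0]
    have hfd : fderiv ℂ (F ∘ ⇑u ∘ G) 0 = A.comp (u.comp Bd) := by
      have hd1 : fderiv ℂ (⇑u ∘ G) 0 = u.comp Bd := by
        rw [fderiv_comp 0 u.differentiableAt hdGat, u.fderiv]
      have hug0 : (⇑u ∘ G) 0 = 0 := by show u (G 0) = 0; rw [hG0, map_zero]
      have h2 : fderiv ℂ (F ∘ ⇑u ∘ G) 0
          = (fderiv ℂ F ((⇑u ∘ G) 0)).comp (fderiv ℂ (⇑u ∘ G) 0) :=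
        fderiv_comp 0 (by rw [hug0]; exact hdFat) (u.differentiableAt.comp 0 hdGat)
      rw [h2, hd1, hug0]
    have hT : ∀ w : EuclideanSpace ℂ (Fin n), (∀ i, ‖w i‖ ≤ 1) → ∀ i,
        ‖(A.comp (u.comp Bd)) w i‖ ≤ 1 := by
      intro w hw i
      rw [← hfd]
      exact schwarz_coord _ hdh hmapsh hh0 w hw i
    exact row_sum (A.comp (u.comp Bd)) hT i
  set p : Fin n := ⟨0, by omega⟩ with hp
  set q : Fin n := ⟨1, by omega⟩ with hq
  have hpq : p ≠ q := by
    intro h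
    have := congrArg Fin.val h
    simp [hp, hq] at this
  have master : ∀ (U : ℝ → (EuclideanSpace ℂ (Fin n) →L[ℂ] EuclideanSpace ℂ (Fin n))),
      (∀ θ z, ‖U θ z‖ = ‖z‖) →
      (∀ θ z, U θ (U (-θ) z) = z) →
      (U 0 = ContinuousLinearMap.id ℂ _) →
      (∀ y, Continuous fun θ => U θ y) →
      ∀ θ i j, i ≠ j → A (U θ (Bd (EuclideanSpace.single j (1:ℂ)))) i = 0 := by
    intro U hnorm hinv h0 hcont θ0 i j hij
    have hval : ∀ (θ : ℝ) (i' j' : Fin n),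
        A (U θ (Bd (EuclideanSpace.single j' (1:ℂ)))) i' = 0 ∨
        ‖A (U θ (Bd (EuclideanSpace.single j' (1:ℂ)))) i'‖ = 1 := by
      intro θ
      have hTS : ∀ w, (A.comp ((U θ).comp Bd)) ((A.comp ((U (-θ)).comp Bd)) w) = w := by
        intro w
        show A (U θ (Bd (A (U (-θ) (Bd w))))) = w
        rw [hba, hinv, hab]
      have hST : ∀ w, (A.comp ((U (-θ)).comp Bd)) ((A.comp ((U θ).comp Bd)) w) = w := by
        intro w
        show A (U (-θ) (Bd (A (U θ (Bd w))))) = w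
        rw [hba]
        have h3 : U (-θ) (U θ (Bd w)) = Bd w := by
          have h4 := hinv (-θ) (Bd w)
          rwa [neg_neg] at h4
        rw [h3, hab]
      have hg := genperm
        (fun i' j' => (A.comp ((U θ).comp Bd)) (EuclideanSpace.single j' (1:ℂ)) i')
        (fun i' j' => (A.comp ((U (-θ)).comp Bd)) (EuclideanSpace.single j' (1:ℂ)) i')
        (fun i' => key (U θ) (hnorm θ) i')
        (fun i' => key (U (-θ)) (hnorm (-θ)) i')
        (fun i' k => entry_mul _ _ hTS i' k)
        (fun i' k => entry_mul _ _ hST i' k)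
      exact fun i' j' => hg i' j'
    have hc : Continuous fun θ : ℝ => A (U θ (Bd (EuclideanSpace.single j (1:ℂ)))) i := by
      have h1 : Continuous fun θ : ℝ => U θ (Bd (EuclideanSpace.single j (1:ℂ))) := hcont _
      have h2 : Continuous fun θ : ℝ => A (U θ (Bd (EuclideanSpace.single j (1:ℂ)))) :=
        A.continuous.comp h1
      exact ((EuclideanSpace.proj i).continuous.comp h2 : _)
    have h00 : A (U 0 (Bd (EuclideanSpace.single j (1:ℂ)))) i = 0 := by
      rw [h0]
      show A (Bd (EuclideanSpace.single j (1:ℂ))) i = 0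
      rw [hab, EuclideanSpace.single_apply, if_neg hij]
    exact path_zero _ hc (fun θ => hval θ i j) h00 θ0
  have hTr : ∀ i j, i ≠ j →
      (A.comp ((rotL p q (Real.pi/2)).comp Bd)) (EuclideanSpace.single j (1:ℂ)) i = 0 :=
    fun i j hij => master (fun θ => rotL p q θ) (fun θ z => rotL_norm p q hpq θ z)
      (fun θ z => rotL_inv p q hpq θ z) (rotL_zero p q hpq) (fun y => rotL_cont p q y)
      (Real.pi/2) i j hij
  have hTw : ∀ i j, i ≠ j →
      (A.comp ((phL q Real.pi).comp Bd)) (EuclideanSpace.single j (1:ℂ)) i = 0 :=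
    fun i j hij => master (fun θ => phL q θ) (fun θ z => phL_norm q θ z)
      (fun θ z => phL_inv q θ z) (phL_zero q) (fun y => phL_cont q y)
      Real.pi i j hij
  have hcomm2 : ∀ x, rotL p q (Real.pi/2) (phL q Real.pi x)
      = phL q Real.pi (rotL p q (Real.pi/2) x) := by
    intro x
    have h1 := diag_comm (A.comp ((rotL p q (Real.pi/2)).comp Bd))
      (A.comp ((phL q Real.pi).comp Bd)) hTr hTw (A x)
    have e1 : (A.comp ((rotL p q (Real.pi/2)).comp Bd)) ((A.comp ((phL q Real.pi).comp Bd)) (A x))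
        = A (rotL p q (Real.pi/2) (phL q Real.pi x)) := by
      show A (rotL p q (Real.pi/2) (Bd (A (phL q Real.pi (Bd (A x)))))) = _
      rw [hba, hba]
    have e2 : (A.comp ((phL q Real.pi).comp Bd)) ((A.comp ((rotL p q (Real.pi/2)).comp Bd)) (A x))
        = A (phL q Real.pi (rotL p q (Real.pi/2) x)) := by
      show A (phL q Real.pi (Bd (A (rotL p q (Real.pi/2) (Bd (A x)))))) = _
      rw [hba, hba]
    have h2 : A (rotL p q (Real.pi/2) (phL q Real.pi x))
        = A (phL q Real.pi (rotL p q (Real.pi/2) x)) := by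
      rw [← e1, ← e2]; exact h1
    have h3 := congrArg Bd h2
    rwa [hba, hba] at h3
  have hph_e0 : phL q Real.pi (EuclideanSpace.single p (1:ℂ)) = EuclideanSpace.single p (1:ℂ) := by
    refine PiLp.ext fun i => ?_
    rw [phL_apply]
    rcases eq_or_ne i q with h | h
    · subst h
      simp [EuclideanSpace.single_apply, Ne.symm hpq]
    · rw [if_neg h]
  have hrot_e0 : rotL p q (Real.pi/2) (EuclideanSpace.single p (1:ℂ))
      = EuclideanSpace.single q (1:ℂ) := by
    refine PiLp.ext fun i => ?_
    rw [rotL_apply]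
    rcases eq_or_ne i p with h | h
    · subst h
      simp [EuclideanSpace.single_apply, hpq, Ne.symm hpq, Real.cos_pi_div_two,
        Real.sin_pi_div_two]
    · rw [if_neg h]
      rcases eq_or_ne i q with h2 | h2
      · subst h2
        simp [EuclideanSpace.single_apply, Ne.symm hpq, Real.cos_pi_div_two,
          Real.sin_pi_div_two]
      · simp [EuclideanSpace.single_apply, h, h2]
  have hx := hcomm2 (EuclideanSpace.single p (1:ℂ))
  rw [hph_e0, hrot_e0] at hx
  have hcoord : (EuclideanSpace.single q (1:ℂ)) q
      = phL q Real.pi (EuclideanSpace.single q (1:ℂ)) q :=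
    congrArg (fun v : EuclideanSpace ℂ (Fin n) => v q) hx
  rw [phL_apply] at hcoord
  simp [EuclideanSpace.single_apply, Complex.exp_pi_mul_I] at hcoord
  norm_num at hcoord
/-- **Poincaré's theorem.** For `n ≥ 2`, the open unit ball
`𝔹ⁿ = {z ∈ ℂⁿ : |z₁|² + ⋯ + |zₙ|² < 1}` and the open unit polydisk
`𝔻ⁿ = {z ∈ ℂⁿ : |zᵢ| < 1 for all i}` are not biholomorphic: there is no
holomorphic bijection `f : 𝔹ⁿ → 𝔻ⁿ` with holomorphic inverse. -/
theorem ball_not_biholomorphic_to_polydisk (n : ℕ) (hn : 2 ≤ n) :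
    ¬ ∃ f g : EuclideanSpace ℂ (Fin n) → EuclideanSpace ℂ (Fin n),
        DifferentiableOn ℂ f (Metric.ball (0 : EuclideanSpace ℂ (Fin n)) 1) ∧
        DifferentiableOn ℂ g {z : EuclideanSpace ℂ (Fin n) | ∀ i, ‖z i‖ < 1} ∧
        Set.MapsTo f (Metric.ball (0 : EuclideanSpace ℂ (Fin n)) 1)
          {z : EuclideanSpace ℂ (Fin n) | ∀ i, ‖z i‖ < 1} ∧
        Set.MapsTo g {z : EuclideanSpace ℂ (Fin n) | ∀ i, ‖z i‖ < 1}
          (Metric.ball (0 : EuclideanSpace ℂ (Fin n)) 1) ∧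
        (∀ z ∈ Metric.ball (0 : EuclideanSpace ℂ (Fin n)) 1, g (f z) = z) ∧
        (∀ w ∈ {z : EuclideanSpace ℂ (Fin n) | ∀ i, ‖z i‖ < 1}, f (g w) = w) := by
  rintro ⟨f, g, hdf, hdg, hmf, hmg, hgf, hfg⟩
  have h0ball : (0 : EuclideanSpace ℂ (Fin n)) ∈ ball (0 : EuclideanSpace ℂ (Fin n)) 1 :=
    mem_ball_self one_pos
  set a : EuclideanSpace ℂ (Fin n) := f 0 with ha_def
  have ha : ∀ i, ‖a i‖ < 1 := hmf h0ball
  have ha' : ∀ i, ‖-(a i)‖ < 1 := fun i => by rw [norm_neg]; exact ha i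
  set ψ : EuclideanSpace ℂ (Fin n) → EuclideanSpace ℂ (Fin n) :=
    fun z => WithLp.toLp 2 (fun i => (z i - a i) / (1 - (starRingEnd ℂ) (a i) * z i)) with hψdef
  set ψ' : EuclideanSpace ℂ (Fin n) → EuclideanSpace ℂ (Fin n) :=
    fun w => WithLp.toLp 2 (fun i => (w i - -(a i)) / (1 - (starRingEnd ℂ) (-(a i)) * w i)) with hψ'def
  have hψmaps : MapsTo ψ (PD n) (PD n) := fun z hz i => mob_mem (ha i) (hz i)
  have hψ'maps : MapsTo ψ' (PD n) (PD n) := fun w hw i => mob_mem (ha' i) (hw i)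
  have hψ'ψ : ∀ z ∈ PD n, ψ' (ψ z) = z := fun z hz => PiLp.ext fun i => mob_inv (ha i) (hz i)
  have hψψ' : ∀ w ∈ PD n, ψ (ψ' w) = w := by
    intro w hw
    refine PiLp.ext fun i => ?_
    have h := mob_inv (ha' i) (hw i)
    simp only [neg_neg] at h
    exact h
  have hproj : ∀ i : Fin n, Differentiable ℂ (fun z : EuclideanSpace ℂ (Fin n) => z i) :=
    fun i => (EuclideanSpace.proj (𝕜 := ℂ) i).differentiable
  have hcoords : ∀ (b : Fin n → ℂ), (∀ i, ‖b i‖ < 1) → ∀ i : Fin n,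
      DifferentiableOn ℂ
        (fun z : EuclideanSpace ℂ (Fin n) => (z i - b i) / (1 - (starRingEnd ℂ) (b i) * z i))
        (PD n) := by
    intro b hb i
    have hnum : DifferentiableOn ℂ (fun z : EuclideanSpace ℂ (Fin n) => z i - b i) (PD n) :=
      ((hproj i).sub_const (b i)).differentiableOn
    have hden : DifferentiableOn ℂ
        (fun z : EuclideanSpace ℂ (Fin n) => 1 - (starRingEnd ℂ) (b i) * z i) (PD n) :=
      ((differentiable_const (1:ℂ)).sub ((hproj i).const_mul _)).differentiableOn
    have hne : ∀ z ∈ PD n, 1 - (starRingEnd ℂ) (b i) * z i ≠ 0 :=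
      fun z hz => mob_denom_ne (hb i) (hz i)
    have hdiv : DifferentiableOn ℂ
        (fun z : EuclideanSpace ℂ (Fin n) =>
          (z i - b i) * (1 - (starRingEnd ℂ) (b i) * z i)⁻¹) (PD n) :=
      hnum.mul (hden.inv hne)
    exact hdiv.congr (fun z hz => div_eq_mul_inv _ _)
  have hψdiff : DifferentiableOn ℂ ψ (PD n) := by
    have hpi : DifferentiableOn ℂ
        (fun z : EuclideanSpace ℂ (Fin n) =>
          (fun i => (z i - a i) / (1 - (starRingEnd ℂ) (a i) * z i) : Fin n → ℂ)) (PD n) :=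
      differentiableOn_pi.mpr (hcoords (fun i => a i) ha)
    exact (((PiLp.continuousLinearEquiv 2 ℂ (fun _ : Fin n => ℂ)).symm :
      (Fin n → ℂ) →L[ℂ] EuclideanSpace ℂ (Fin n)).differentiable.comp_differentiableOn hpi : _)
  have hψ'diff : DifferentiableOn ℂ ψ' (PD n) := by
    have hpi : DifferentiableOn ℂ
        (fun z : EuclideanSpace ℂ (Fin n) =>
          (fun i => (z i - -(a i)) / (1 - (starRingEnd ℂ) (-(a i)) * z i) : Fin n → ℂ)) (PD n) :=
      differentiableOn_pi.mpr (hcoords (fun i => -(a i)) ha')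
    exact (((PiLp.continuousLinearEquiv 2 ℂ (fun _ : Fin n => ℂ)).symm :
      (Fin n → ℂ) →L[ℂ] EuclideanSpace ℂ (Fin n)).differentiable.comp_differentiableOn hpi : _)
  have hdF : DifferentiableOn ℂ (ψ ∘ f) (ball (0 : EuclideanSpace ℂ (Fin n)) 1) :=
    hψdiff.comp hdf hmf
  have hFmaps : MapsTo (ψ ∘ f) (ball (0 : EuclideanSpace ℂ (Fin n)) 1) (PD n) :=
    hψmaps.comp hmf
  have hdG : DifferentiableOn ℂ (g ∘ ψ') (PD n) := hdg.comp hψ'diff hψ'maps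
  have hGmaps : MapsTo (g ∘ ψ') (PD n) (ball (0 : EuclideanSpace ℂ (Fin n)) 1) :=
    hmg.comp hψ'maps
  have hGF : ∀ z ∈ ball (0 : EuclideanSpace ℂ (Fin n)) 1, (g ∘ ψ') ((ψ ∘ f) z) = z := by
    intro z hz
    show g (ψ' (ψ (f z))) = z
    rw [hψ'ψ (f z) (hmf hz)]
    exact hgf z hz
  have hFG : ∀ w ∈ PD n, (ψ ∘ f) ((g ∘ ψ') w) = w := by
    intro w hw
    show ψ (f (g (ψ' w))) = w
    rw [hfg (ψ' w) (hψ'maps hw)]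
    exact hψψ' w hw
  have hF0 : (ψ ∘ f) 0 = 0 := by
    show ψ a = 0
    refine PiLp.ext fun i => ?_
    show (a i - a i) / (1 - (starRingEnd ℂ) (a i) * a i) = (0 : EuclideanSpace ℂ (Fin n)) i
    simp
  exact no_biholo_normalized n hn (ψ ∘ f) (g ∘ ψ') hdF hdG hFmaps hGmaps hGF hFG hF0
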